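/- Let N(q;d) denote the number of monic irreducible polynomials of degree d over F_q with nonzero constant term. Then in the formal power series ring over ℚ (or ℤ), the identity ∏_{d ≥ 1} (1 + u^d)^{-N(q;d)} = (1+u)(1-qu)/(1-qu^2) holds. -/

import Mathlib

namespace ProdIrrAux
open Polynomial Finset UniqueFactorizationMonoid

variable {F : Type*} [Field F] [Fintype F]

lemma finite_natDegree_le (n : ℕ) : {f : F[X] | f.natDegree ≤ n}.Finite := by
  have h1 : Finite (degreeLT F (n+1)) :=
    Finite.of_equiv _ (degreeLTEquiv F (n+1)).symm.toEquiv
  have h2 : {f : F[X] | f.natDegree ≤ n} ⊆ ↑(degreeLT F (n+1)) := by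
    intro f hf
    simp only [SetLike.mem_coe, mem_degreeLT]
    exact lt_of_le_of_lt degree_le_natDegree
      (by exact_mod_cast Nat.lt_succ_of_le hf)
  exact Set.Finite.subset (Set.finite_coe_iff.mp h1) h2

lemma natCard_monic (m : ℕ) :
    Nat.card {f : F[X] // f.Monic ∧ f.natDegree = m} = Fintype.card F ^ m := by
  have e : {f : F[X] // f.Monic ∧ f.natDegree = m} ≃ degreeLT F m := by
    refine ⟨fun f => ⟨f.1 - X ^ m, ?_⟩, fun g => ⟨X ^ m + g.1, ?_, ?_⟩, ?_, ?_⟩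
    · rw [mem_degreeLT, degree_lt_iff_coeff_zero]
      intro k hk
      obtain ⟨hm, hd⟩ := f.2
      simp only [coeff_sub, Polynomial.coeff_X_pow]
      rcases eq_or_lt_of_le hk with h | h
      · have h1 : f.1.coeff k = 1 := by
          subst h; simpa only [hd] using hm.coeff_natDegree
        rw [h1, if_pos h.symm]; ring
      · rw [coeff_eq_zero_of_natDegree_lt (lt_of_le_of_lt (le_of_eq hd) h),
          if_neg (by omega)]
        ring
    · exact monic_X_pow_add (mem_degreeLT.mp g.2)
    · have hd : (X ^ m + g.1).degree = (m : WithBot ℕ) := by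
        rw [degree_add_eq_left_of_degree_lt, degree_X_pow]
        rw [degree_X_pow]; exact mem_degreeLT.mp g.2
      exact natDegree_eq_of_degree_eq_some hd
    · intro f; ext1; ring
    · intro g; ext1; ring
  rw [Nat.card_congr e, Nat.card_congr (degreeLTEquiv F m).toEquiv,
    Nat.card_eq_fintype_card, Fintype.card_fun, Fintype.card_fin]

lemma ncard_monic (m : ℕ) :
    {f : F[X] | f.Monic ∧ f.natDegree = m}.ncard = Fintype.card F ^ m := by
  rw [← Nat.card_coe_set_eq, ← natCard_monic m]
  rfl

variable (F) in
def Mset (m : ℕ) : Set F[X] := {f | f.Monic ∧ f.natDegree = m ∧ f.coeff 0 ≠ 0}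

variable (F) in
def Iset (d : ℕ) : Set F[X] :=
  {p | p.Monic ∧ Irreducible p ∧ p.natDegree = d ∧ p.coeff 0 ≠ 0}

lemma Mset_finite (m : ℕ) : (Mset F m).Finite :=
  (finite_natDegree_le m).subset fun _ hf => le_of_eq hf.2.1

lemma Iset_finite (d : ℕ) : (Iset F d).Finite :=
  (finite_natDegree_le d).subset fun _ hf => le_of_eq hf.2.2.1

lemma ncard_M (m : ℕ) (hm : m ≠ 0) :
    (Mset F m).ncard + Fintype.card F ^ (m-1) = Fintype.card F ^ m := by
  classical
  set B : Set F[X] := {f | f.Monic ∧ f.natDegree = m ∧ f.coeff 0 = 0} with hB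
  have hBim : B = (fun g => X * g) '' {g : F[X] | g.Monic ∧ g.natDegree = m - 1} := by
    ext f
    constructor
    · rintro ⟨hf, hd, hc⟩
      obtain ⟨g, rfl⟩ := Polynomial.X_dvd_iff.mpr hc
      have hg : g.Monic := (monic_X).of_mul_monic_left hf
      refine ⟨g, ⟨hg, ?_⟩, rfl⟩
      have h2 := natDegree_mul (X_ne_zero (R := F)) hg.ne_zero
      rw [natDegree_X] at h2
      omega
    · rintro ⟨g, ⟨hg, hgd⟩, rfl⟩
      refine ⟨monic_X.mul hg, ?_, ?_⟩
      · rw [natDegree_mul (X_ne_zero (R := F)) hg.ne_zero, natDegree_X]; omega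
      · simp [Polynomial.mul_coeff_zero]
  have hU : {f : F[X] | f.Monic ∧ f.natDegree = m} = Mset F m ∪ B := by
    ext f
    constructor
    · rintro ⟨h1, h2⟩
      by_cases h : f.coeff 0 = 0
      · exact Or.inr ⟨h1, h2, h⟩
      · exact Or.inl ⟨h1, h2, h⟩
    · rintro (⟨h1, h2, _⟩ | ⟨h1, h2, _⟩) <;> exact ⟨h1, h2⟩
  have hdisj : Disjoint (Mset F m) B := by
    rw [Set.disjoint_left]
    rintro f ⟨_, _, hc⟩ ⟨_, _, hc'⟩
    exact hc hc'
  have hBfin : B.Finite := (finite_natDegree_le m).subset fun _ hf => le_of_eq hf.2.1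
  have hBcard : B.ncard = Fintype.card F ^ (m-1) := by
    rw [hBim, Set.ncard_image_of_injective _ (mul_right_injective₀ (X_ne_zero (R := F))),
      ncard_monic]
  have h := ncard_monic (F := F) m
  rw [hU, Set.ncard_union_eq hdisj (Mset_finite m) hBfin, hBcard] at h
  exact h

lemma ncard_M_zero : (Mset F 0).ncard = 1 := by
  have : Mset F 0 = {1} := by
    ext f
    constructor
    · rintro ⟨h1, h2, _⟩
      exact (h1.natDegree_eq_zero).mp h2
    · rintro rfl
      exact ⟨monic_one, natDegree_one, by simp⟩
  rw [this, Set.ncard_singleton]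

lemma setIn_finite (n : ℕ) :
    {p : F[X] | p.Monic ∧ Irreducible p ∧ p.coeff 0 ≠ 0 ∧ p.natDegree ≤ n}.Finite :=
  (finite_natDegree_le n).subset fun _ hf => hf.2.2.2

variable (F) in
noncomputable def Ifin (n : ℕ) : Finset F[X] := (setIn_finite (F := F) n).toFinset

lemma mem_Ifin {n : ℕ} {p : F[X]} :
    p ∈ Ifin F n ↔ p.Monic ∧ Irreducible p ∧ p.coeff 0 ≠ 0 ∧ p.natDegree ≤ n :=
  Set.Finite.mem_toFinset _

lemma natDegree_pos_of_mem_Ifin {n : ℕ} {p : F[X]} (hp : p ∈ Ifin F n) :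
    0 < p.natDegree :=
  natDegree_pos_iff_degree_pos.mpr (degree_pos_of_irreducible (mem_Ifin.mp hp).2.1)

lemma filter_Ifin_card (n d : ℕ) (hd : d ≤ n) [DecidableEq F] :
    ((Ifin F n).filter (fun p => p.natDegree = d)).card = (Iset F d).ncard := by
  classical
  rw [Set.ncard_eq_toFinset_card (Iset F d) (Iset_finite d)]
  congr 1
  ext p
  simp only [Finset.mem_filter, mem_Ifin, Set.Finite.mem_toFinset, Iset,
    Set.mem_setOf_eq]
  constructor
  · rintro ⟨⟨h1, h2, h3, h4⟩, h5⟩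
    exact ⟨h1, h2, h5, h3⟩
  · rintro ⟨h1, h2, h3, h4⟩
    exact ⟨⟨h1, h2, h4, h3 ▸ hd⟩, h3⟩

section Core

variable [DecidableEq F] {n : ℕ}

variable (n) in
noncomputable def Phi (e : {p // p ∈ Ifin F n} → ℕ) : F[X] :=
  ∏ p : {p // p ∈ Ifin F n}, (p : F[X]) ^ e p

lemma Phi_monic (e : {p // p ∈ Ifin F n} → ℕ) : (Phi n e).Monic :=
  monic_prod_of_monic _ _ fun p _ => ((mem_Ifin.mp p.2).1).pow _

lemma Phi_natDegree (e : {p // p ∈ Ifin F n} → ℕ) :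
    (Phi n e).natDegree = ∑ p : {p // p ∈ Ifin F n}, e p * (p : F[X]).natDegree := by
  rw [Phi, natDegree_prod _ _ (fun p _ => pow_ne_zero _ (mem_Ifin.mp p.2).1.ne_zero)]
  simp [natDegree_pow]

lemma Phi_coeff_zero (e : {p // p ∈ Ifin F n} → ℕ) : (Phi n e).coeff 0 ≠ 0 := by
  rw [coeff_zero_eq_eval_zero, Phi, eval_prod]
  rw [Finset.prod_ne_zero_iff]
  intro p _
  rw [eval_pow]
  apply pow_ne_zero
  rw [← coeff_zero_eq_eval_zero]
  exact (mem_Ifin.mp p.2).2.2.1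

lemma Phi_factors (e : {p // p ∈ Ifin F n} → ℕ) :
    normalizedFactors (Phi n e)
      = ∑ p : {p // p ∈ Ifin F n}, Multiset.replicate (e p) (p : F[X]) := by
  have hprod : (∑ p : {p // p ∈ Ifin F n},
      Multiset.replicate (e p) ((p : F[X]))).prod = Phi n e := by
    rw [Multiset.prod_sum]
    simp only [Multiset.prod_replicate]
    rfl
  have hmem : ∀ a ∈ ∑ p : {p // p ∈ Ifin F n},
      Multiset.replicate (e p) ((p : F[X])), a ∈ Ifin F n := by
    intro a ha
    obtain ⟨p, _, hp⟩ := Multiset.mem_sum.mp ha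
    rw [Multiset.eq_of_mem_replicate hp]
    exact p.2
  rw [← hprod, normalizedFactors_prod_eq]
  · rw [Multiset.map_congr rfl
      (fun x hx => ((mem_Ifin.mp (hmem x hx)).1).normalize_eq_self), Multiset.map_id']
  · exact fun a ha => (mem_Ifin.mp (hmem a ha)).2.1

lemma Phi_count (e : {p // p ∈ Ifin F n} → ℕ)
    (p₀ : {p // p ∈ Ifin F n}) :
    (normalizedFactors (Phi n e)).count (p₀ : F[X]) = e p₀ := by
  rw [Phi_factors, Multiset.count_sum']
  have h : ∀ p : {p // p ∈ Ifin F n},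
      Multiset.count (p₀ : F[X]) (Multiset.replicate (e p) (p : F[X]))
        = if p = p₀ then e p else 0 := by
    intro p
    rw [Multiset.count_replicate]
    by_cases hp : p = p₀
    · subst hp; rw [if_pos rfl, if_pos rfl]
    · rw [if_neg hp, if_neg]; exact fun h => hp (Subtype.ext (by rw [h]))
  rw [Finset.sum_congr rfl (fun p _ => h p), Finset.sum_ite_eq' Finset.univ p₀]
  simp

lemma Phi_inj : Function.Injective (Phi (F := F) n) := by
  classical
  intro e₁ e₂ h
  funext p
  rw [← Phi_count e₁ p, h, Phi_count]

lemma card_filter_eq (k : ℕ) (hk : k ≤ n) :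
    (((Fintype.piFinset (fun _ : {p // p ∈ Ifin F n} => Finset.range (n+1)))).filter
      (fun e => ∑ p : {p // p ∈ Ifin F n}, e p * (p : F[X]).natDegree = k)).card = (Mset F k).ncard := by
  classical
  rw [Set.ncard_eq_toFinset_card (Mset F k) (Mset_finite k)]
  apply Finset.card_bij (fun e _ => Phi n e)
  · intro e he
    rw [Set.Finite.mem_toFinset]
    have hsum := (Finset.mem_filter.mp he).2
    exact ⟨Phi_monic e, by rw [Phi_natDegree, hsum], Phi_coeff_zero e⟩
  · intro e₁ _ e₂ _ h
    exact Phi_inj h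
  · intro f hf
    rw [Set.Finite.mem_toFinset] at hf
    obtain ⟨hfm, hfd, hfc⟩ := hf
    have hf0 : f ≠ 0 := hfm.ne_zero
    have hmemI : ∀ a ∈ normalizedFactors f, a ∈ Ifin F n := by
      intro a ha
      have hirr := irreducible_of_normalized_factor a ha
      have hdvd := dvd_of_mem_normalizedFactors ha
      have hmon : a.Monic := by
        have h1 := normalize_normalized_factor a ha
        rw [← h1]
        exact monic_normalize hirr.ne_zero
      refine mem_Ifin.mpr ⟨hmon, hirr, ?_, ?_⟩
      · intro hc
        have h2 : (X : F[X]) ∣ f := (X_dvd_iff.mpr hc).trans hdvd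
        rw [X_dvd_iff] at h2
        exact hfc h2
      · exact (natDegree_le_of_dvd hdvd hf0).trans (hfd ▸ hk)
    set e : {p // p ∈ Ifin F n} → ℕ := fun p => (normalizedFactors f).count ↑p with he
    have hPhi : Phi n e = f := by
      have hsub : (normalizedFactors f).toFinset ⊆ Ifin F n := by
        intro a ha
        exact hmemI a (Multiset.mem_toFinset.mp ha)
      have h1 : Phi n e = (normalizedFactors f).prod := by
        rw [Phi, Finset.prod_coe_sort (Ifin F n)
          (fun q => q ^ (normalizedFactors f).count q)]
        exact (Finset.prod_multiset_count_of_subset _ _ hsub).symm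
      have h2 : (normalizedFactors f).prod.Monic := by
        have := monic_multiset_prod_of_monic (normalizedFactors f) id
          (fun a ha => (mem_Ifin.mp (hmemI a ha)).1)
        rwa [Multiset.map_id] at this
      rw [h1]
      exact eq_of_monic_of_associated h2 hfm (prod_normalizedFactors hf0)
    have hdeg : ∑ p : {p // p ∈ Ifin F n}, e p * (p : F[X]).natDegree = k := by
      rw [← Phi_natDegree e, hPhi, hfd]
    refine ⟨e, ?_, hPhi⟩
    rw [Finset.mem_filter]
    refine ⟨?_, hdeg⟩
    rw [Fintype.mem_piFinset]
    intro p
    rw [Finset.mem_range]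
    have h1 : e p * (p : F[X]).natDegree ≤ k := by
      rw [← hdeg]
      exact Finset.single_le_sum (f := fun p : {p // p ∈ Ifin F n} => e p * (p : F[X]).natDegree) (fun _ _ => Nat.zero_le _) (Finset.mem_univ p)
    have h2 : 0 < (p : F[X]).natDegree := natDegree_pos_of_mem_Ifin p.2
    have h3 : e p ≤ e p * (p : F[X]).natDegree := Nat.le_mul_of_pos_right _ h2
    omega

lemma coeff_prodG (k : ℕ) (hk : k ≤ n) :
    (∏ p : {p // p ∈ Ifin F n}, ∑ j ∈ Finset.range (n+1),
      (Polynomial.X : Polynomial ℤ) ^ (j * (p : F[X]).natDegree)).coeff k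
      = ((Mset F k).ncard : ℤ) := by
  classical
  rw [Finset.prod_univ_sum, Polynomial.finset_sum_coeff]
  have h : ∀ e ∈ Fintype.piFinset (fun _ : {p // p ∈ Ifin F n} => Finset.range (n+1)),
      (∏ p : {p // p ∈ Ifin F n},
        (Polynomial.X : Polynomial ℤ) ^ (e p * (p : F[X]).natDegree)).coeff k
      = if (∑ p : {p // p ∈ Ifin F n}, e p * (p : F[X]).natDegree) = k then 1 else 0 := by
    intro e _
    rw [Finset.prod_pow_eq_pow_sum, Polynomial.coeff_X_pow]
    exact if_congr eq_comm rfl rfl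
  rw [Finset.sum_congr rfl h, Finset.sum_boole, card_filter_eq k hk]

lemma dvd_prod_sub_one {ι : Type*} {R : Type*} [CommRing R] {x : R} {s : Finset ι} {f : ι → R}
    (h : ∀ i ∈ s, x ∣ f i - 1) : x ∣ (∏ i ∈ s, f i) - 1 := by
  classical
  induction s using Finset.cons_induction with
  | empty => simp
  | cons a s ha ih =>
    rw [Finset.prod_cons]
    have h1 := h a (Finset.mem_cons_self a s)
    have h2 := ih (fun i hi => h i (Finset.mem_cons_of_mem hi))
    have h3 : f a * ∏ i ∈ s, f i - 1
        = (f a - 1) * ∏ i ∈ s, f i + ((∏ i ∈ s, f i) - 1) := by ring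
    rw [h3]
    exact dvd_add (h1.mul_right _) h2

variable (F) in
noncomputable def Spoly (n : ℕ) : Polynomial ℤ :=
  ∑ m ∈ Finset.range (n+1), Polynomial.C ((Mset F m).ncard : ℤ) * Polynomial.X ^ m

lemma Spoly_coeff {n k : ℕ} (hk : k ≤ n) :
    (Spoly F n).coeff k = ((Mset F k).ncard : ℤ) := by
  rw [Spoly, Polynomial.finset_sum_coeff]
  have h : ∀ m ∈ Finset.range (n+1),
      (Polynomial.C ((Mset F m).ncard : ℤ) * Polynomial.X ^ m).coeff k
        = if k = m then ((Mset F m).ncard : ℤ) else 0 := by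
    intro m _
    rw [Polynomial.coeff_C_mul, Polynomial.coeff_X_pow, mul_ite, mul_one, mul_zero]
  rw [Finset.sum_congr rfl h, Finset.sum_ite_eq]
  simp [Nat.lt_succ_of_le hk]

lemma euler_dvd [DecidableEq F] (n : ℕ) (N : ℕ → ℕ)
    (hN : ∀ d, N d = (Iset F d).ncard) :
    (Polynomial.X : Polynomial ℤ)^(n+1) ∣
      (∏ d ∈ Finset.Icc 1 n, (1 - Polynomial.X ^ d)^(N d)) * Spoly F n - 1 := by
  classical
  set G : ℕ → Polynomial ℤ := fun d => ∑ j ∈ Finset.range (n+1), Polynomial.X ^ (j*d)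
    with hG
  set Q : Polynomial ℤ := ∏ d ∈ Finset.Icc 1 n, (1 - Polynomial.X ^ d)^(N d) with hQ
  set P : Polynomial ℤ := ∏ d ∈ Finset.Icc 1 n, (G d)^(N d) with hP
  -- fiberwise
  have h_fiber : P = ∏ p : {p // p ∈ Ifin F n}, G ((p : F[X]).natDegree) := by
    rw [Finset.prod_coe_sort (Ifin F n) (fun p => G p.natDegree)]
    rw [← Finset.prod_fiberwise_of_maps_to (g := Polynomial.natDegree)
      (t := Finset.Icc 1 n)
      (fun p hp => Finset.mem_Icc.mpr
        ⟨natDegree_pos_of_mem_Ifin hp, (mem_Ifin.mp hp).2.2.2⟩)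
      (fun p => G p.natDegree)]
    rw [hP]
    apply Finset.prod_congr rfl
    intro d hd
    have hinner : ∏ p ∈ (Ifin F n).filter (fun p => p.natDegree = d), G p.natDegree
        = ∏ _p ∈ (Ifin F n).filter (fun p => p.natDegree = d), G d := by
      apply Finset.prod_congr rfl
      intro p hp
      rw [(Finset.mem_filter.mp hp).2]
    rw [hinner, Finset.prod_const, filter_Ifin_card n d (Finset.mem_Icc.mp hd).2, ← hN]
  -- coefficients of P agree with Spoly
  have h1 : (Polynomial.X : Polynomial ℤ)^(n+1) ∣ P - Spoly F n := by
    rw [Polynomial.X_pow_dvd_iff]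
    intro k hk
    have hk' : k ≤ n := by omega
    rw [Polynomial.coeff_sub, h_fiber, Spoly_coeff hk', hG]
    rw [coeff_prodG k hk', sub_self]
  -- Q * P ≡ 1
  have h2 : (Polynomial.X : Polynomial ℤ)^(n+1) ∣ Q * P - 1 := by
    rw [hQ, hP, ← Finset.prod_mul_distrib]
    apply dvd_prod_sub_one
    intro d hd
    rw [← mul_pow]
    have hgeom : (1 - Polynomial.X ^ d) * G d
        = 1 - ((Polynomial.X : Polynomial ℤ)^(n+1))^d := by
      have hGd : G d = ∑ i ∈ Finset.range (n+1), ((Polynomial.X : Polynomial ℤ) ^ d)^i := by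
        rw [hG]
        apply Finset.sum_congr rfl
        intro j _
        rw [← pow_mul, mul_comm]
      rw [hGd, ← pow_right_comm]
      linear_combination (-1 : Polynomial ℤ) * geom_sum_mul ((Polynomial.X : Polynomial ℤ)^d) (n+1)
    rw [hgeom]
    have hstep : (Polynomial.X : Polynomial ℤ)^(n+1) ∣
        (1 - ((Polynomial.X : Polynomial ℤ)^(n+1))^d) - 1 := by
      have hd1 : d ≠ 0 := by
        have := (Finset.mem_Icc.mp hd).1; omega
      have : (1 - ((Polynomial.X : Polynomial ℤ)^(n+1))^d) - 1
          = -(((Polynomial.X : Polynomial ℤ)^(n+1))^d) := by ring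
      rw [this, dvd_neg]
      exact dvd_pow_self _ hd1
    have := dvd_prod_sub_one (s := Finset.range (N d))
      (f := fun _ => 1 - ((Polynomial.X : Polynomial ℤ)^(n+1))^d)
      (fun _ _ => hstep)
    simpa [Finset.prod_const] using this
  have h3 : Q * Spoly F n - 1 = (Q * P - 1) - Q * (P - Spoly F n) := by ring
  rw [h3]
  exact dvd_sub h2 (h1.mul_left Q)

lemma sq_dvd (n : ℕ) {q : ℕ} (hq : Fintype.card F = q) :
    (Polynomial.X : Polynomial ℤ)^(n+1) ∣
      Spoly F n * (1 - Polynomial.C (q:ℤ) * Polynomial.X) - (1 - Polynomial.X) := by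
  have hc0 : ((Mset F 0).ncard : ℤ) = 1 := by rw [ncard_M_zero]; norm_num
  have hcm : ∀ m : ℕ, m ≠ 0 → ((Mset F m).ncard : ℤ) + (q:ℤ)^(m-1) = (q:ℤ)^m := by
    intro m hm
    have h := ncard_M (F := F) m hm
    rw [hq] at h
    exact_mod_cast h
  rw [Polynomial.X_pow_dvd_iff]
  intro k hk
  have hk' : k ≤ n := by omega
  have hmul : Spoly F n * (1 - Polynomial.C (q:ℤ) * Polynomial.X)
      = Spoly F n - Polynomial.C (q:ℤ) * (Spoly F n * Polynomial.X) := by ring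
  rw [Polynomial.coeff_sub, hmul, Polynomial.coeff_sub, Polynomial.coeff_C_mul]
  match k, hk' with
  | 0, _ =>
    have h0 : (Spoly F n * Polynomial.X).coeff 0 = 0 := by
      rw [Polynomial.mul_coeff_zero, Polynomial.coeff_X_zero, mul_zero]
    rw [Spoly_coeff (Nat.zero_le n), hc0, h0]
    simp
  | 1, hk' =>
    have h1 := hcm 1 one_ne_zero
    norm_num at h1
    rw [Polynomial.coeff_mul_X, Spoly_coeff hk', Spoly_coeff (Nat.zero_le n), hc0]
    simp only [Polynomial.coeff_sub, Polynomial.coeff_one, Polynomial.coeff_X]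
    norm_num
    linear_combination h1
  | (k+2), hk' =>
    have h1 := hcm (k+2) (by omega)
    have h2 := hcm (k+1) (by omega)
    rw [show k+2-1 = k+1 from rfl] at h1
    rw [show k+1-1 = k from rfl] at h2
    rw [Polynomial.coeff_mul_X, Spoly_coeff hk', Spoly_coeff (by omega : k+1 ≤ n)]
    simp only [Polynomial.coeff_sub, Polynomial.coeff_one, Polynomial.coeff_X]
    have hB : (q:ℤ)^(k+2) = (q:ℤ) * (q:ℤ)^(k+1) := by rw [pow_succ]; ring
    have hA : (q:ℤ)^(k+1) = (q:ℤ) * (q:ℤ)^k := by rw [pow_succ]; ring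
    norm_num
    linear_combination h1 - (q:ℤ) * h2 - hA + hB

lemma key (n : ℕ) {q : ℕ} (hq : Fintype.card F = q) (N : ℕ → ℕ)
    (hN : ∀ d, N d = (Iset F d).ncard) :
    (Polynomial.X : Polynomial ℤ)^(n+1) ∣
      (∏ d ∈ Finset.Icc 1 n, (1 + Polynomial.X ^ d)^(N d)) *
        ((1 + Polynomial.X) * (1 - Polynomial.C (q:ℤ) * Polynomial.X))
      - (1 - Polynomial.C (q:ℤ) * Polynomial.X ^ 2) := by
  classical
  set I : Ideal (Polynomial ℤ) := Ideal.span {(Polynomial.X : Polynomial ℤ)^(n+1)} with hI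
  let π : Polynomial ℤ →+* Polynomial ℤ ⧸ I := Ideal.Quotient.mk I
  have key_iff : ∀ a b : Polynomial ℤ,
      π a = π b ↔ (Polynomial.X : Polynomial ℤ)^(n+1) ∣ a - b := by
    intro a b
    rw [Ideal.Quotient.eq, hI, Ideal.mem_span_singleton]
  -- substitution X ↦ X²
  set σ : Polynomial ℤ →+* Polynomial ℤ :=
    Polynomial.eval₂RingHom Polynomial.C (Polynomial.X ^ 2) with hσ
  have hσX : σ Polynomial.X = Polynomial.X ^ 2 := Polynomial.eval₂_X _ _
  have hσC : ∀ a : ℤ, σ (Polynomial.C a) = Polynomial.C a := fun a => Polynomial.eval₂_C _ _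
  have hσdvd : ∀ a b : Polynomial ℤ,
      ((Polynomial.X : Polynomial ℤ)^(n+1) ∣ a - b) → π (σ a) = π (σ b) := by
    intro a b hab
    rw [key_iff]
    have h1 := map_dvd σ hab
    rw [map_sub, map_pow, hσX] at h1
    refine dvd_trans ?_ h1
    rw [← pow_mul]
    exact pow_dvd_pow _ (by omega)
  set Q := ∏ d ∈ Finset.Icc 1 n, (1 - (Polynomial.X : Polynomial ℤ) ^ d)^(N d) with hQdef
  set P := ∏ d ∈ Finset.Icc 1 n, (1 + (Polynomial.X : Polynomial ℤ) ^ d)^(N d) with hPdef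
  set S := Spoly F n with hSdef
  -- the four congruences
  have hQS : π Q * π S = 1 := by
    rw [← map_mul, ← map_one π, key_iff]
    exact euler_dvd n N hN
  have hQ2S2 : π (σ Q) * π (σ S) = 1 := by
    rw [← map_mul, ← map_mul, ← map_one π, ← map_one σ]
    exact hσdvd _ _ (euler_dvd n N hN)
  have hS3 : π S * π (1 - Polynomial.C (q:ℤ) * Polynomial.X)
      = π (1 - Polynomial.X) := by
    rw [← map_mul, key_iff]
    exact sq_dvd n hq
  have hS4 : π (σ S) * π (1 - Polynomial.C (q:ℤ) * Polynomial.X ^ 2)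
      = π (1 - Polynomial.X ^ 2) := by
    have h := hσdvd _ _ (sq_dvd n hq)
    simp only [map_mul, map_sub, map_one, map_pow, hσC, hσX] at h ⊢
    exact h
  have hPQ : π P * π Q = π (σ Q) := by
    rw [← map_mul]
    congr 1
    rw [hPdef, hQdef, map_prod, ← Finset.prod_mul_distrib]
    apply Finset.prod_congr rfl
    intro d _
    rw [← mul_pow, map_pow, map_sub, map_one, map_pow, hσX]
    congr 1
    rw [← pow_right_comm]
    ring
  -- assemble
  rw [← key_iff, map_mul, map_mul]
  have hT : π (1 + Polynomial.X) * π (1 - Polynomial.C (q:ℤ) * Polynomial.X)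
      = π Q * π (σ S) * π (1 - Polynomial.C (q:ℤ) * Polynomial.X ^ 2) := by
    symm
    calc π Q * π (σ S) * π (1 - Polynomial.C (q:ℤ) * Polynomial.X ^ 2)
        = π Q * (π (σ S) * π (1 - Polynomial.C (q:ℤ) * Polynomial.X ^ 2)) := by ring
      _ = π Q * π (1 - Polynomial.X ^ 2) := by rw [hS4]
      _ = π Q * (π (1 - Polynomial.X) * π (1 + Polynomial.X)) := by
          congr 1
          rw [← map_mul]
          congr 1
          ring
      _ = (π Q * π (1 - Polynomial.X)) * π (1 + Polynomial.X) := by ring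
      _ = (π Q * (π S * π (1 - Polynomial.C (q:ℤ) * Polynomial.X))) * π (1 + Polynomial.X) := by
          rw [hS3]
      _ = ((π Q * π S) * π (1 - Polynomial.C (q:ℤ) * Polynomial.X)) * π (1 + Polynomial.X) := by
          ring
      _ = π (1 - Polynomial.C (q:ℤ) * Polynomial.X) * π (1 + Polynomial.X) := by
          rw [hQS]; ring
      _ = π (1 + Polynomial.X) * π (1 - Polynomial.C (q:ℤ) * Polynomial.X) := by ring
  calc π P * (π (1 + Polynomial.X) * π (1 - Polynomial.C (q:ℤ) * Polynomial.X))
      = π P * (π Q * π (σ S) * π (1 - Polynomial.C (q:ℤ) * Polynomial.X ^ 2)) := by rw [hT]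
    _ = (π P * π Q) * π (σ S) * π (1 - Polynomial.C (q:ℤ) * Polynomial.X ^ 2) := by ring
    _ = (π (σ Q) * π (σ S)) * π (1 - Polynomial.C (q:ℤ) * Polynomial.X ^ 2) := by rw [hPQ]
    _ = π (1 - Polynomial.C (q:ℤ) * Polynomial.X ^ 2) := by rw [hQ2S2]; ring

end Core

end ProdIrrAux

open PowerSeries

/-- With `N d` the number of monic irreducible polynomials of degree `d` over `F_q`
with nonzero constant term, the identity
`∏_{d ≥ 1} (1 + u^d)^{-N d} = (1+u)(1-qu)/(1-qu²)` holds in `ℤ[[u]]`, stated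
coefficientwise: for every `n`, the `n`-th coefficient of
`(∏_{d=1}^{n} (1+u^d)^{N d}) · (1+u)(1-qu)` equals that of `1 - qu²`
(factors with `d > n` do not affect coefficients up to degree `n`). -/
theorem prod_irreducible_nonzero_const (q : ℕ) (F : Type*) [Field F] [Fintype F]
    (hq : Fintype.card F = q) (N : ℕ → ℕ)
    (hN : ∀ d, N d = {p : Polynomial F |
      p.Monic ∧ Irreducible p ∧ p.natDegree = d ∧ p.coeff 0 ≠ 0}.ncard) :
    ∀ n : ℕ,
      (PowerSeries.coeff (R := ℤ) n)
        ((∏ d ∈ Finset.Icc 1 n, (1 + (X : PowerSeries ℤ) ^ d) ^ N d) *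
          ((1 + X) * (1 - PowerSeries.C (R := ℤ) (q : ℤ) * X))) =
      (PowerSeries.coeff (R := ℤ) n) (1 - PowerSeries.C (R := ℤ) (q : ℤ) * X ^ 2) := by
  classical
  intro n
  have hN' : ∀ d, N d = (ProdIrrAux.Iset F d).ncard := hN
  have h := ProdIrrAux.key (F := F) n hq N hN'
  set L : Polynomial ℤ := (∏ d ∈ Finset.Icc 1 n, (1 + Polynomial.X ^ d)^(N d)) *
      ((1 + Polynomial.X) * (1 - Polynomial.C (q:ℤ) * Polynomial.X)) with hLdef
  set R : Polynomial ℤ := 1 - Polynomial.C (q:ℤ) * Polynomial.X ^ 2 with hRdef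
  have hcoeff : L.coeff n = R.coeff n := by
    rw [Polynomial.X_pow_dvd_iff] at h
    have h2 := h n (by omega)
    rw [Polynomial.coeff_sub, sub_eq_zero] at h2
    exact h2
  have hL : (∏ d ∈ Finset.Icc 1 n, (1 + (X : PowerSeries ℤ) ^ d) ^ N d) *
      ((1 + X) * (1 - PowerSeries.C (R := ℤ) (q : ℤ) * X)) = ((L : Polynomial ℤ) : PowerSeries ℤ) := by
    rw [hLdef]
    rw [← Polynomial.coeToPowerSeries.ringHom_apply]
    simp only [map_mul, map_prod, map_pow, map_add, map_sub, map_one]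
    simp only [Polynomial.coeToPowerSeries.ringHom_apply, Polynomial.coe_X, Polynomial.coe_C]
  have hR : (1 - PowerSeries.C (R := ℤ) (q : ℤ) * X ^ 2 : PowerSeries ℤ)
      = ((R : Polynomial ℤ) : PowerSeries ℤ) := by
    rw [hRdef]
    rw [← Polynomial.coeToPowerSeries.ringHom_apply]
    simp only [map_mul, map_pow, map_sub, map_one]
    simp only [Polynomial.coeToPowerSeries.ringHom_apply, Polynomial.coe_X, Polynomial.coe_C]
  rw [hL, hR, Polynomial.coeff_coe, Polynomial.coeff_coe]
  exact hcoeff
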